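/- Let n > 0, E ∈ ℝ, k ∈ ℝ, and let P, u : ℝ → ℝ with u twice differentiable and u(x) > 0 for all x, satisfying the Schrödinger-type equation u''(x) + (E − P(x)) u(x) = −(n k/2) u(x)^((4−n)/n) (real power) for all x. Let σ : ℝ → ℝ be differentiable on an open interval I with σ'(t) = u(σ(t)) for t ∈ I. Define a(t) = u(σ(t))^(−2/n) and H(t) = a'(t)/a(t). Then for all t ∈ I: P(σ(t)) · u(σ(t))² = −(n/2) H'(t) + E · a(t)^(−n) + (n k/2) · a(t)^(−2). -/

import Mathlib

/-- Equation (3.12): along the trajectory σ, the potential term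
P·u² of the Schrödinger-type equation equals −(n/2)H' + E·a^(−n) + (nk/2)a^(−2). -/
theorem potential_term_along_trajectory
    (n E k : ℝ) (hn : 0 < n) (P u : ℝ → ℝ)
    (hu : Differentiable ℝ u) (hu' : Differentiable ℝ (deriv u))
    (hupos : ∀ x, 0 < u x)
    (hSchr : ∀ x, deriv (deriv u) x + (E - P x) * u x
      = -(n * k / 2) * u x ^ ((4 - n) / n))
    (t₁ t₂ : ℝ) (σ : ℝ → ℝ)
    (hσ : ∀ t ∈ Set.Ioo t₁ t₂, DifferentiableAt ℝ σ t)
    (hσ' : ∀ t ∈ Set.Ioo t₁ t₂, deriv σ t = u (σ t))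
    (a H : ℝ → ℝ)
    (ha : a = fun t => u (σ t) ^ (-2 / n))
    (hH : H = fun t => deriv a t / a t) :
    ∀ t ∈ Set.Ioo t₁ t₂,
      P (σ t) * u (σ t) ^ 2
        = -(n / 2) * deriv H t + E * a t ^ (-n) + n * k / 2 * a t ^ (-2 : ℝ) := by
  intro t ht
  have hn0 : n ≠ 0 := hn.ne'
  have hmem : Set.Ioo t₁ t₂ ∈ nhds t := isOpen_Ioo.mem_nhds ht
  have hσd : ∀ s ∈ Set.Ioo t₁ t₂, HasDerivAt σ (u (σ s)) s := by
    intro s hs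
    have h := (hσ s hs).hasDerivAt
    rwa [hσ' s hs] at h
  have hfd : ∀ s ∈ Set.Ioo t₁ t₂,
      HasDerivAt (fun r => u (σ r)) (deriv u (σ s) * u (σ s)) s := by
    intro s hs
    exact ((hu (σ s)).hasDerivAt).comp s (hσd s hs)
  have had : ∀ s ∈ Set.Ioo t₁ t₂,
      HasDerivAt a ((deriv u (σ s) * u (σ s)) * (-2 / n) * u (σ s) ^ (-2 / n - 1)) s := by
    intro s hs
    rw [ha]
    exact (hfd s hs).rpow_const (Or.inl (hupos (σ s)).ne')
  have hHs : ∀ s ∈ Set.Ioo t₁ t₂, H s = (-2 / n) * deriv u (σ s) := by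
    intro s hs
    have hus := hupos (σ s)
    rw [hH]
    simp only
    rw [(had s hs).deriv, ha]
    simp only
    rw [Real.rpow_sub hus, Real.rpow_one]
    field_simp
  have hHev : H =ᶠ[nhds t] fun s => (-2 / n) * deriv u (σ s) :=
    Filter.eventuallyEq_of_mem hmem hHs
  have hH' : deriv H t = (-2 / n) * (deriv (deriv u) (σ t) * u (σ t)) := by
    rw [hHev.deriv_eq]
    exact (((hu' (σ t)).hasDerivAt.comp t (hσd t ht)).const_mul (-2 / n)).deriv
  have hux : 0 < u (σ t) := hupos (σ t)
  have han : a t ^ (-n) = u (σ t) ^ 2 := by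
    rw [ha]
    simp only
    rw [← Real.rpow_natCast (u (σ t)) 2, ← Real.rpow_mul hux.le]
    congr 1
    field_simp
    norm_num
  have ha2 : a t ^ (-2 : ℝ) = u (σ t) ^ (4 / n) := by
    rw [ha]
    simp only
    rw [← Real.rpow_mul hux.le]
    congr 1
    field_simp
    ring
  have hpow : u (σ t) ^ ((4 - n) / n) * u (σ t) = u (σ t) ^ (4 / n) := by
    have he : (4 - n) / n + 1 = 4 / n := by field_simp; ring
    calc u (σ t) ^ ((4 - n) / n) * u (σ t)
        = u (σ t) ^ ((4 - n) / n + 1) := by rw [Real.rpow_add hux, Real.rpow_one]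
      _ = u (σ t) ^ (4 / n) := by rw [he]
  have h2 : -(n / 2) * (-2 / n * (deriv (deriv u) (σ t) * u (σ t)))
      = deriv (deriv u) (σ t) * u (σ t) := by
    field_simp
  rw [hH', han, ha2, ← hpow, h2]
  linear_combination (-u (σ t)) * hSchr (σ t)
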